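/- If A₁, …, A_m are two-sided ideals of a ring L, each possessing local units, then the product A₁ ⋯ A_m equals the intersection A₁ ∩ ⋯ ∩ A_m. -/
import Mathlib


/-- The product of two two-sided ideals: the smallest two-sided ideal
containing all products `a * b` with `a ∈ A`, `b ∈ B`. -/
def tsiMul {L : Type*} [NonUnitalRing L] (A B : TwoSidedIdeal L) : TwoSidedIdeal L :=
  sInf {I : TwoSidedIdeal L | ∀ a ∈ A, ∀ b ∈ B, a * b ∈ I}

/-- A two-sided ideal `A` has local units if every `a ∈ A` admits an idempotent
`u ∈ A` with `u * a = a = a * u`. -/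
def HasLocalUnits {L : Type*} [NonUnitalRing L] (A : TwoSidedIdeal L) : Prop :=
  ∀ a ∈ A, ∃ u ∈ A, u * u = u ∧ u * a = a ∧ a * u = a

/-- The product `A 0 ⋯ A m` of the family `A` of two-sided ideals. -/
def tsiProd {L : Type*} [NonUnitalRing L] {m : ℕ}
    (A : Fin (m + 1) → TwoSidedIdeal L) : TwoSidedIdeal L :=
  (List.ofFn fun i : Fin m => A i.castSucc).foldr tsiMul (A (Fin.last m))

lemma mul_mem_tsiMul {L : Type*} [NonUnitalRing L] {A B : TwoSidedIdeal L}
    {a b : L} (ha : a ∈ A) (hb : b ∈ B) : a * b ∈ tsiMul A B := by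
  rw [tsiMul, TwoSidedIdeal.mem_sInf]
  exact fun I hI => hI a ha b hb

lemma tsiMul_eq_inf {L : Type*} [NonUnitalRing L] {A B : TwoSidedIdeal L}
    (hA : HasLocalUnits A) : tsiMul A B = A ⊓ B := by
  apply le_antisymm
  · apply sInf_le
    intro a ha b hb
    rw [TwoSidedIdeal.mem_inf]
    exact ⟨A.mul_mem_right a b ha, B.mul_mem_left a b hb⟩
  · intro x hx
    rw [TwoSidedIdeal.mem_inf] at hx
    obtain ⟨u, hu, -, hux, -⟩ := hA x hx.1
    exact hux ▸ mul_mem_tsiMul hu hx.2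

lemma tsiProd_succ {L : Type*} [NonUnitalRing L] {m : ℕ}
    (A : Fin (m + 2) → TwoSidedIdeal L) :
    tsiProd A = tsiMul (A 0) (tsiProd (A ∘ Fin.succ)) := by
  simp only [tsiProd, List.ofFn_succ, List.foldr_cons, Function.comp,
    Fin.succ_castSucc, Fin.succ_last, Fin.castSucc_zero]

theorem prod_eq_inf_of_local_units {L : Type*} [NonUnitalRing L]
    (m : ℕ) (A : Fin (m + 1) → TwoSidedIdeal L)
    (hA : ∀ i, HasLocalUnits (A i)) :
    tsiProd A = ⨅ i, A i := by
  induction m with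
  | zero =>
    simp only [tsiProd, List.ofFn_zero, List.foldr_nil]
    refine le_antisymm (le_iInf fun i => ?_) (iInf_le _ _)
    have : i = Fin.last 0 := Fin.fin_one_eq_zero i ▸ rfl
    exact this ▸ le_rfl
  | succ n ih =>
    rw [tsiProd_succ, tsiMul_eq_inf (hA 0), ih (A ∘ Fin.succ) (fun i => hA i.succ)]
    apply le_antisymm
    · refine le_iInf fun i => ?_
      cases i using Fin.cases with
      | zero => exact inf_le_left
      | succ j => exact inf_le_right.trans (iInf_le _ j)
    · exact le_inf (iInf_le _ 0) (le_iInf fun j => iInf_le _ j.succ)
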